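/- Let T be a tree (a connected simple graph with no cycles), let f be a graph automorphism of T, and let v, w be vertices of T such that v is not f-periodic, i.e. f^k(v) ≠ v for every k ≥ 1. Then there exist n₀ ∈ ℕ and a vertex u adjacent to v such that for every n ≥ n₀, the vertex u lies on the unique reduced path from v to f^n(w); in particular, the first edge of the geodesic from v to f^n(w) is independent of n for n ≥ n₀. -/

import Mathlib

namespace Stmt18Aux

open SimpleGraph Walk

variable {V : Type*} {T : SimpleGraph V}

noncomputable def geo (hconn : T.Connected) (a b : V) : T.Walk a b :=
  @Walk.bypass V T (Classical.decEq V) _ _ ((hconn a b).some)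

lemma geo_isPath (hconn : T.Connected) (a b : V) : (geo hconn a b).IsPath :=
  letI := Classical.decEq V
  Walk.bypass_isPath ((hconn a b).some)

lemma geo_unique (hconn : T.Connected) (hacyclic : T.IsAcyclic) {a b : V}
    (p : T.Walk a b) (hp : p.IsPath) : p = geo hconn a b :=
  congrArg Subtype.val (hacyclic.path_unique ⟨p, hp⟩ ⟨geo hconn a b, geo_isPath hconn a b⟩)

lemma length_geo (hconn : T.Connected) (hacyclic : T.IsAcyclic) (a b : V) :
    (geo hconn a b).length = T.dist a b := by
  classical
  obtain ⟨p, hp⟩ := hconn.exists_walk_length_eq_dist a b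
  have h1 : T.dist a b ≤ (geo hconn a b).length := SimpleGraph.dist_le _
  have h2 : p.bypass = geo hconn a b := geo_unique hconn hacyclic _ (Walk.bypass_isPath _)
  have h3 : p.bypass.length ≤ p.length := Walk.length_bypass_le _
  have h4 := congrArg Walk.length h2
  omega

lemma mem_support_dist (hconn : T.Connected) (hacyclic : T.IsAcyclic) {a b x : V}
    (hx : x ∈ (geo hconn a b).support) :
    T.dist a x + T.dist x b = T.dist a b := by
  classical
  have h1 : ((geo hconn a b).takeUntil x hx).length + ((geo hconn a b).dropUntil x hx).length
      = T.dist a b := by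
    rw [← length_geo hconn hacyclic a b]
    conv_rhs => rw [← Walk.take_spec (geo hconn a b) hx]
    rw [Walk.length_append]
  have h2 := SimpleGraph.dist_le ((geo hconn a b).takeUntil x hx)
  have h3 := SimpleGraph.dist_le ((geo hconn a b).dropUntil x hx)
  have h4 := hconn.dist_triangle (u := a) (v := x) (w := b)
  omega

lemma getVert_mem_support {a b : V} (p : T.Walk a b) (i : ℕ) : p.getVert i ∈ p.support := by
  induction p generalizing i with
  | nil => simp [Walk.getVert]
  | cons h q ih =>
    cases i with
    | zero => simp
    | succ n =>
      rw [Walk.getVert_cons_succ, Walk.support_cons]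
      exact List.mem_cons_of_mem _ (ih n)

lemma getVert_one_ne {a b : V} {p : T.Walk a b} (hp : p.IsPath) (hl : 0 < p.length) :
    p.getVert 1 ≠ a := by
  cases p with
  | nil => simp at hl
  | cons h q =>
    rw [Walk.getVert_cons_succ, Walk.getVert_zero]
    obtain ⟨_, ha⟩ := (Walk.cons_isPath_iff _ _).mp hp
    exact fun hq => ha (hq ▸ q.start_mem_support)

lemma adj_geo_one (hconn : T.Connected) (hacyclic : T.IsAcyclic) {a b : V} (hne : a ≠ b) :
    T.Adj a ((geo hconn a b).getVert 1) := by
  have hpos : 0 < (geo hconn a b).length := by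
    rw [length_geo hconn hacyclic]; exact hconn.pos_dist_of_ne hne
  have := (geo hconn a b).adj_getVert_succ hpos
  simpa using this

lemma support_inter (hconn : T.Connected) (hacyclic : T.IsAcyclic) {a b c : V}
    {p : T.Walk a b} {q : T.Walk a c}
    (hp : p.IsPath) (hq : q.IsPath) (hne : p.getVert 1 ≠ q.getVert 1) :
    ∀ x, x ∈ p.support → x ∈ q.support → x = a := by
  classical
  intro x hxp hxq
  by_contra hxa
  cases p with
  | nil => simp at hxp; exact hxa hxp
  | cons hab p' =>
    cases q with
    | nil => simp at hxq; exact hxa hxq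
    | cons hac q' =>
      rw [Walk.support_cons, List.mem_cons] at hxp hxq
      rcases hxp with rfl | hxp
      · exact hxa rfl
      rcases hxq with rfl | hxq
      · exact hxa rfl
      obtain ⟨hp', hap'⟩ := (Walk.cons_isPath_iff _ _).mp hp
      obtain ⟨hq', haq'⟩ := (Walk.cons_isPath_iff _ _).mp hq
      have h1 : (Walk.cons hab (p'.takeUntil x hxp)).IsPath := by
        rw [Walk.cons_isPath_iff]
        exact ⟨hp'.takeUntil hxp, fun h => hap' (Walk.support_takeUntil_subset _ _ h)⟩
      have h2 : (Walk.cons hac (q'.takeUntil x hxq)).IsPath := by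
        rw [Walk.cons_isPath_iff]
        exact ⟨hq'.takeUntil hxq, fun h => haq' (Walk.support_takeUntil_subset _ _ h)⟩
      have h3 : Walk.cons hab (p'.takeUntil x hxp) = Walk.cons hac (q'.takeUntil x hxq) := by
        rw [geo_unique hconn hacyclic _ h1, geo_unique hconn hacyclic _ h2]
      have h4 := congrArg (fun wk : T.Walk a x => wk.getVert 1) h3
      simp only [Walk.getVert_cons_succ, Walk.getVert_zero] at h4
      apply hne
      simp only [Walk.getVert_cons_succ, Walk.getVert_zero, h4]

lemma join_isPath (hconn : T.Connected) (hacyclic : T.IsAcyclic) {a b c : V}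
    {p : T.Walk a b} {q : T.Walk a c}
    (hp : p.IsPath) (hq : q.IsPath) (hne : p.getVert 1 ≠ q.getVert 1) :
    (p.reverse.append q).IsPath := by
  have hD := support_inter hconn hacyclic hp hq hne
  rw [Walk.isPath_def, Walk.support_append, Walk.support_reverse]
  apply List.Nodup.append
  · exact List.nodup_reverse.mpr ((Walk.isPath_def _).mp hp)
  · exact ((Walk.isPath_def _).mp hq).tail
  · intro x hx1 hx2
    have hxp : x ∈ p.support := List.mem_reverse.mp hx1
    have hxq : x ∈ q.support := List.mem_of_mem_tail hx2
    have hxa : x = a := hD x hxp hxq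
    subst hxa
    have hnq := (Walk.isPath_def _).mp hq
    rw [Walk.support_eq_cons] at hnq
    exact (List.nodup_cons.mp hnq).1 hx2

lemma head_align (hconn : T.Connected) (hacyclic : T.IsAcyclic) {a b c : V}
    (h : a ∉ (geo hconn b c).support) :
    (geo hconn a b).getVert 1 = (geo hconn a c).getVert 1 := by
  by_contra hne
  have hjoin := join_isPath hconn hacyclic (geo_isPath hconn a b) (geo_isPath hconn a c) hne
  have heq : (geo hconn a b).reverse.append (geo hconn a c) = geo hconn b c :=
    geo_unique hconn hacyclic _ hjoin
  apply h
  rw [← heq, Walk.support_append]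
  apply List.mem_append.mpr
  left
  rw [Walk.support_reverse, List.mem_reverse]
  exact (geo hconn a b).start_mem_support

lemma getVert_map (g : T →g T) {a b : V} (p : T.Walk a b) (i : ℕ) :
    (p.map g).getVert i = g (p.getVert i) := by
  induction p generalizing i with
  | nil => simp [Walk.getVert]
  | cons h q ih =>
    cases i with
    | zero => simp
    | succ n => simpa [Walk.map_cons, Walk.getVert_cons_succ] using ih n

lemma getVert_one_append {a b c : V} (p : T.Walk a b) (q : T.Walk b c) (h : 0 < p.length) :
    (p.append q).getVert 1 = p.getVert 1 := by
  rw [Walk.getVert_append]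
  split_ifs with h1
  · rfl
  · have hl : p.length = 1 := by omega
    have h2 : q.getVert (1 - p.length) = b := by rw [hl]; simp
    have h3 : p.getVert 1 = b := by rw [← hl]; exact p.getVert_length
    rw [h2, h3]

lemma dist_map (hconn : T.Connected) (g : T ≃g T) (a b : V) :
    T.dist (g a) (g b) = T.dist a b := by
  have key : ∀ (g : T ≃g T) (a b : V), T.dist (g a) (g b) ≤ T.dist a b := by
    intro g a b
    obtain ⟨p, hp⟩ := hconn.exists_walk_length_eq_dist a b
    calc T.dist (g a) (g b) ≤ (p.map g.toHom).length := SimpleGraph.dist_le _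
    _ = p.length := Walk.length_map _ _
    _ = T.dist a b := hp
  refine le_antisymm (key g a b) ?_
  have := key g.symm (g a) (g b)
  simpa using this

lemma geo_map (hconn : T.Connected) (hacyclic : T.IsAcyclic) (g : T ≃g T) (a b : V) :
    (geo hconn a b).map g.toHom = geo hconn (g a) (g b) :=
  geo_unique hconn hacyclic _
    (Walk.map_isPath_of_injective g.injective (geo_isPath hconn a b))

lemma mem_geo_map (hconn : T.Connected) (hacyclic : T.IsAcyclic) (g : T ≃g T) {a b x : V}
    (hx : x ∈ (geo hconn a b).support) :
    g x ∈ (geo hconn (g a) (g b)).support := by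
  rw [← geo_map hconn hacyclic g a b, Walk.support_map]
  exact List.mem_map_of_mem hx

/-- iterates of the automorphism as automorphisms -/
def F (f : T ≃g T) : ℕ → T ≃g T
  | 0 => RelIso.refl _
  | n+1 => (F f n).trans f

@[simp] lemma F_zero (f : T ≃g T) (z : V) : F f 0 z = z := rfl

@[simp] lemma F_succ (f : T ≃g T) (n : ℕ) (z : V) : F f (n+1) z = f (F f n z) := rfl

lemma F_apply (f : T ≃g T) (n : ℕ) (z : V) : F f n z = (fun x : V => f x)^[n] z := by
  induction n with
  | zero => rfl
  | succ n ih => rw [F_succ, ih, Function.iterate_succ_apply']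

lemma F_add (f : T ≃g T) (m n : ℕ) (z : V) : F f (m + n) z = F f m (F f n z) := by
  rw [F_apply, F_apply, F_apply, Function.iterate_add_apply]

lemma F_comm (f : T ≃g T) (n : ℕ) (z : V) : F f n (f z) = f (F f n z) := by
  rw [F_apply, F_apply]
  have h1 := Function.iterate_succ_apply (fun x : V => f x) n z
  have h2 := Function.iterate_succ_apply' (fun x : V => f x) n z
  exact h1.symm.trans h2

lemma F_symm_succ (f : T ≃g T) (n : ℕ) (z : V) :
    (F f (n+1)).symm z = (F f n).symm (f.symm z) := by
  apply (F f (n+1)).injective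
  rw [RelIso.apply_symm_apply]
  symm
  show f (F f n ((F f n).symm (f.symm z))) = z
  rw [RelIso.apply_symm_apply, RelIso.apply_symm_apply]

lemma symm_orbit (f : T ≃g T) (c : V) (h : f (f c) = c) (n : ℕ) :
    ((F f n).symm c = c ∨ (F f n).symm c = f c) ∧
      ((F f n).symm (f c) = c ∨ (F f n).symm (f c) = f c) := by
  induction n with
  | zero => exact ⟨Or.inl rfl, Or.inr rfl⟩
  | succ n ih =>
    have hsc : f.symm c = f c := by
      apply f.injective
      rw [RelIso.apply_symm_apply, h]
    have hsfc : f.symm (f c) = c := f.symm_apply_apply c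
    constructor
    · rw [F_symm_succ, hsc]; exact ih.2
    · rw [F_symm_succ, hsfc]; exact ih.1

lemma orbit_inj (f : T ≃g T) (v : V) (hv : ∀ k, 1 ≤ k → F f k v ≠ v) :
    Function.Injective (fun n : ℕ => (F f n).symm v) := by
  have key : ∀ m n : ℕ, m < n → (F f m).symm v ≠ (F f n).symm v := by
    intro m n hlt heq
    set z := (F f n).symm v with hz
    have h1 : F f n z = v := RelIso.apply_symm_apply _ _
    have h2 : F f m z = v := by rw [← heq]; exact RelIso.apply_symm_apply _ _
    have hn : n = m + (n - m) := by omega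
    have h3 : F f m (F f (n - m) z) = v := by rw [← F_add, ← hn]; exact h1
    have h4 : F f (n - m) z = z := (F f m).injective (h3.trans h2.symm)
    have h5 : F f (n - m) v = v := by
      calc F f (n - m) v = F f (n - m) (F f n z) := by rw [h1]
      _ = F f ((n - m) + n) z := by rw [F_add]
      _ = F f (n + (n - m)) z := by rw [Nat.add_comm]
      _ = F f n (F f (n - m) z) := by rw [F_add]
      _ = v := by rw [h4, h1]
    exact hv (n - m) (by omega) h5
  intro m n h
  rcases lt_trichotomy m n with h1 | h1 | h1
  · exact absurd h (key m n h1)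
  · exact h1
  · exact absurd h.symm (key n m h1)

lemma elliptic (hconn : T.Connected) (hacyclic : T.IsAcyclic) (f : T ≃g T) (v w c : V)
    (hv : ∀ k, 1 ≤ k → F f k v ≠ v) (hffc : f (f c) = c) :
    ∃ n₀ u, T.Adj v u ∧ ∀ n, n₀ ≤ n → u ∈ (geo hconn v (F f n w)).support := by
  classical
  set S : Set V := {x | x ∈ (geo hconn c w).support} ∪ {x | x ∈ (geo hconn (f c) w).support}
    with hS
  have hSfin : S.Finite := ((geo hconn c w).support.finite_toSet).union
    ((geo hconn (f c) w).support.finite_toSet)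
  have hNfin : {n : ℕ | (F f n).symm v ∈ S}.Finite := by
    have : {n : ℕ | (F f n).symm v ∈ S} = (fun n : ℕ => (F f n).symm v) ⁻¹' S := rfl
    rw [this]
    exact Set.Finite.preimage (Set.injOn_of_injective (orbit_inj f v hv)) hSfin
  obtain ⟨B, hB⟩ := hNfin.bddAbove
  set n₀ := B + 1 with hn₀
  have key : ∀ n, n₀ ≤ n → v ∉ (geo hconn c (F f n w)).support := by
    intro n hn hmem
    have h2 : (F f n).symm v ∈ (geo hconn ((F f n).symm c) w).support := by
      have h0 := mem_geo_map hconn hacyclic (F f n).symm hmem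
      have he : (F f n).symm ((F f n) w) = w := (F f n).symm_apply_apply w
      rw [he] at h0
      exact h0
    have h3 : (F f n).symm v ∈ S := by
      rcases (symm_orbit f c hffc n).1 with h | h
      · left; rw [← h]; exact h2
      · right; rw [← h]; exact h2
    have h4 : n ≤ B := hB h3
    omega
  have hvc : v ≠ c := by
    intro h
    exact key n₀ le_rfl (h ▸ (geo hconn c (F f n₀ w)).start_mem_support)
  refine ⟨n₀, (geo hconn v c).getVert 1, adj_geo_one hconn hacyclic hvc, ?_⟩
  intro n hn
  rw [head_align hconn hacyclic (key n hn)]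
  exact getVert_mem_support _ _

lemma hyperbolic (hconn : T.Connected) (hacyclic : T.IsAcyclic) (f : T ≃g T) (v w c : V)
    (ℓ : ℕ) (hl : 1 ≤ ℓ) (hc : T.dist c (f c) = ℓ)
    (hnb : (geo hconn c (f c)).reverse.getVert 1 ≠ f ((geo hconn c (f c)).getVert 1)) :
    ∃ n₀ u, T.Adj v u ∧ ∀ n, n₀ ≤ n → u ∈ (geo hconn v (F f n w)).support := by
  classical
  set p := geo hconn c (f c) with hpdef
  set x₁ := p.getVert 1 with hx₁
  set y := p.reverse.getVert 1 with hy
  have hplen : p.length = ℓ := by rw [hpdef, length_geo hconn hacyclic, hc]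
  have htrans : ∀ n : ℕ, T.dist c (F f n c) = n * ℓ ∧
      (1 ≤ n → (geo hconn c (F f n c)).reverse.getVert 1 = F f (n-1) y) := by
    intro n
    induction n with
    | zero =>
      refine ⟨?_, fun h => absurd h (by omega)⟩
      show T.dist c c = 0 * ℓ
      rw [SimpleGraph.dist_self, Nat.zero_mul]
    | succ n ih =>
      by_cases hn0 : n = 0
      · subst hn0
        have h1 : F f 1 c = f c := rfl
        rw [h1]
        refine ⟨by rw [hc, Nat.one_mul], fun _ => ?_⟩
        show p.reverse.getVert 1 = F f 0 y
        rfl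
      · have hn1 : 1 ≤ n := by omega
        obtain ⟨IH1, IH2'⟩ := ih
        have IH2 := IH2' hn1
        have hrw : F f (n+1) c = F f n (f c) := by rw [F_succ, F_comm]
        rw [hrw]
        set A := geo hconn c (F f n c) with hA
        set B := geo hconn (F f n c) (F f n (f c)) with hB
        have hBmap : B = p.map (F f n).toHom := (geo_map hconn hacyclic (F f n) c (f c)).symm
        have hBlen : B.length = ℓ := by
          rw [hBmap, Walk.length_map _ _, hplen]
        have hB1 : B.getVert 1 = F f n x₁ := by
          rw [hBmap, getVert_map]; rfl
        have hBrev : B.reverse.getVert 1 = F f n y := by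
          rw [hBmap, Walk.reverse_map, getVert_map]; rfl
        have hne2 : A.reverse.getVert 1 ≠ B.getVert 1 := by
          rw [IH2, hB1]
          intro hcontra
          apply hnb
          have hn' : n = (n - 1) + 1 := by omega
          have h5 : F f n x₁ = F f (n-1) (f x₁) := by
            conv_lhs => rw [hn']
            rw [F_succ, F_comm]
          rw [h5] at hcontra
          exact (F f (n-1)).injective hcontra
        have hWpath : (A.append B).IsPath := by
          have hj := join_isPath hconn hacyclic ((geo_isPath hconn _ _).reverse)
            (geo_isPath hconn _ _) hne2
          rwa [Walk.reverse_reverse] at hj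
        have hWgeo : A.append B = geo hconn c (F f n (f c)) :=
          geo_unique hconn hacyclic _ hWpath
        have hAlen : A.length = n * ℓ := by
          rw [hA, length_geo hconn hacyclic, IH1]
        constructor
        · rw [← length_geo hconn hacyclic, ← hWgeo, Walk.length_append, hAlen, hBlen,
            Nat.succ_mul]
        · intro _
          rw [← hWgeo, Walk.reverse_append, getVert_one_append _ _ (by
            rw [Walk.length_reverse, hBlen]; omega), hBrev]
          congr 1
  set dv := T.dist c v with hdv
  set dw := T.dist c w with hdw
  have hup : ∀ k : ℕ, T.dist w (F f k w) ≤ dw + k * ℓ + dw := by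
    intro k
    have t1 : T.dist w (F f k w) ≤ T.dist w c + T.dist c (F f k w) := hconn.dist_triangle
    have t2 : T.dist c (F f k w) ≤ T.dist c (F f k c) + T.dist (F f k c) (F f k w) :=
      hconn.dist_triangle
    have t3 : T.dist (F f k c) (F f k w) = dw := by rw [dist_map hconn, hdw]
    have t4 : T.dist w c = dw := by rw [SimpleGraph.dist_comm, hdw]
    have t5 := (htrans k).1
    omega
  have hlow : ∀ n : ℕ, n * ℓ ≤ dv + T.dist v (F f n w) + dw := by
    intro n
    have t1 : T.dist c (F f n c) ≤ T.dist c v + T.dist v (F f n c) := hconn.dist_triangle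
    have t2 : T.dist v (F f n c) ≤ T.dist v (F f n w) + T.dist (F f n w) (F f n c) :=
      hconn.dist_triangle
    have t3 : T.dist (F f n w) (F f n c) = dw := by
      rw [dist_map hconn, SimpleGraph.dist_comm, hdw]
    have t5 := (htrans n).1
    omega
  set n₀ := 2 * dw + dv + 1 with hn₀
  have key : ∀ m, n₀ ≤ m → ∀ k, 1 ≤ k → v ∉ (geo hconn (F f m w) (F f (m+k) w)).support := by
    intro m hm k hk hmem
    have h1 := mem_support_dist hconn hacyclic hmem
    have h2 : T.dist (F f m w) (F f (m+k) w) = T.dist w (F f k w) := by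
      have hx : F f (m+k) w = F f m (F f k w) := F_add f m k w
      rw [hx, dist_map hconn]
    have h3 := hup k
    have h4 := hlow m
    have h5 := hlow (m+k)
    have h6 : T.dist (F f m w) v = T.dist v (F f m w) := SimpleGraph.dist_comm
    have h7 : (m+k) * ℓ = m * ℓ + k * ℓ := Nat.add_mul m k ℓ
    have h8 : m ≤ m * ℓ := Nat.le_mul_of_pos_right m (by omega)
    omega
  have hne0 : v ≠ F f n₀ w := by
    intro h
    have h4 := hlow n₀
    rw [← h, SimpleGraph.dist_self] at h4
    have h8 : n₀ ≤ n₀ * ℓ := Nat.le_mul_of_pos_right n₀ (by omega)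
    omega
  refine ⟨n₀, (geo hconn v (F f n₀ w)).getVert 1, adj_geo_one hconn hacyclic hne0, ?_⟩
  intro n hn
  rcases eq_or_lt_of_le hn with rfl | hlt
  · exact getVert_mem_support _ _
  · have hk : n₀ + (n - n₀) = n := by omega
    have hkey := key n₀ le_rfl (n - n₀) (by omega)
    rw [hk] at hkey
    rw [head_align hconn hacyclic hkey]
    exact getVert_mem_support _ _

end Stmt18Aux

open SimpleGraph in
open Stmt18Aux in
theorem stmt18 {V : Type*} (T : SimpleGraph V) (hconn : T.Connected)
    (hacyclic : T.IsAcyclic) (f : T ≃g T) (v w : V)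
    (hv : ∀ k : ℕ, 1 ≤ k → (fun z : V => f z)^[k] v ≠ v) :
    ∃ (n₀ : ℕ) (u : V), T.Adj v u ∧
      ∀ n : ℕ, n₀ ≤ n →
        ∀ p : T.Walk v ((fun z : V => f z)^[n] w), p.IsPath → u ∈ p.support := by
  classical
  have hv' : ∀ k, 1 ≤ k → F f k v ≠ v := by
    intro k hk h
    apply hv k hk
    rw [F_apply] at h
    exact h
  obtain ⟨c, hc⟩ : ∃ c : V, T.dist c (f c) = sInf {d : ℕ | ∃ x : V, T.dist x (f x) = d} := by
    have := Nat.sInf_mem (s := {d : ℕ | ∃ x : V, T.dist x (f x) = d})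
      ⟨T.dist v (f v), v, rfl⟩
    obtain ⟨x, hx⟩ := this
    exact ⟨x, hx⟩
  set ℓ := sInf {d : ℕ | ∃ x : V, T.dist x (f x) = d} with hℓ
  have hmin : ∀ x : V, ℓ ≤ T.dist x (f x) := fun x => Nat.sInf_le ⟨x, rfl⟩
  have main : ∃ n₀ u, T.Adj v u ∧ ∀ n, n₀ ≤ n → u ∈ (geo hconn v (F f n w)).support := by
    rcases Nat.eq_zero_or_pos ℓ with hl0 | hlpos
    · have hfc : f c = c := by
        rw [hl0] at hc
        exact (hconn.dist_eq_zero_iff.mp hc).symm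
      exact elliptic hconn hacyclic f v w c hv' (by rw [hfc, hfc])
    · set p := geo hconn c (f c) with hpdef
      set x₁ := p.getVert 1 with hx₁
      set y := p.reverse.getVert 1 with hy
      have hplen : p.length = ℓ := by rw [hpdef, length_geo hconn hacyclic, hc]
      by_cases hyx : y = f x₁
      · rcases eq_or_lt_of_le (Nat.succ_le_of_lt hlpos) with hl1 | hl2
        · -- ℓ = 1
          have hplen1 : p.length = 1 := by omega
          have hx1fc : x₁ = f c := by
            rw [hx₁, show (1 : ℕ) = p.length by omega]
            exact p.getVert_length
          have hyc : y = c := by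
            rw [hy, show (1 : ℕ) = p.reverse.length by rw [Walk.length_reverse]; omega]
            exact p.reverse.getVert_length
          have hffc : f (f c) = c := by
            rw [← hx1fc, ← hyx, hyc]
          exact elliptic hconn hacyclic f v w c hv' hffc
        · -- ℓ ≥ 2 : contradiction
          exfalso
          have hppath : p.IsPath := geo_isPath _ _ _
          have hpos : 0 < p.length := by omega
          have hx1c : x₁ ≠ c := getVert_one_ne hppath hpos
          have hrevlen : p.reverse.length = ℓ := by rw [Walk.length_reverse, hplen]
          have hyfc : y ≠ f c := getVert_one_ne hppath.reverse (by omega)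
          have hadjcx : T.Adj c x₁ := by
            have := p.adj_getVert_succ (by omega : 0 < p.length)
            simpa using this
          have hadjfcy : T.Adj (f c) y := by
            have := p.reverse.adj_getVert_succ (by omega : 0 < p.reverse.length)
            simpa only [Walk.getVert_zero, zero_add] using this
          have hdcx : T.dist c x₁ = 1 := by
            have hle : T.dist c x₁ ≤ 1 := by
              simpa using SimpleGraph.dist_le (Walk.cons hadjcx Walk.nil)
            have hpos2 : 0 < T.dist c x₁ := hconn.pos_dist_of_ne (Ne.symm hx1c)
            omega
          have hdyfc : T.dist y (f c) = 1 := by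
            have hle : T.dist y (f c) ≤ 1 := by
              simpa using SimpleGraph.dist_le (Walk.cons hadjfcy.symm Walk.nil)
            have hpos2 : 0 < T.dist y (f c) := hconn.pos_dist_of_ne hyfc
            omega
          have hymem : y ∈ p.support := by
            have := getVert_mem_support p.reverse 1
            rw [Walk.support_reverse, List.mem_reverse] at this
            exact this
          have hsum := mem_support_dist hconn hacyclic (x := y) hymem
          rw [hc] at hsum
          have hyc : y ≠ c := by
            intro h
            rw [h, hc] at hdyfc
            omega
          have hcny : c ∉ (geo hconn y (f c)).support := by
            intro hmem2
            have h9 := mem_support_dist hconn hacyclic hmem2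
            rw [hc, hdyfc] at h9
            omega
          have halign := head_align hconn hacyclic hcny
          have hx1mem : x₁ ∈ (geo hconn c y).support := by
            rw [hx₁, hpdef, ← halign]
            exact getVert_mem_support _ _
          have hsum2 := mem_support_dist hconn hacyclic hx1mem
          have hmin2 := hmin x₁
          have hdx1y : T.dist x₁ (f x₁) = T.dist x₁ y := by rw [hyx]
          rw [hdcx] at hsum2
          omega
      · exact hyperbolic hconn hacyclic f v w c ℓ hlpos hc hyx
  obtain ⟨n₀, u, hadj, hmem⟩ := main
  refine ⟨n₀, u, hadj, ?_⟩
  intro n hn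
  have he : (fun z : V => f z)^[n] w = F f n w := (F_apply f n w).symm
  rw [he]
  intro p hp
  rw [geo_unique hconn hacyclic p hp]
  exact hmem n hn
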